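/- Let G be a connected simple graph whose vertex set is partitioned into two nonempty cliques A and B, such that at least two edges of G have one endpoint in A and the other in B. Then every proper vertex coloring of G is a strong conflict-free vertex-connection coloring of G; in particular svcfc(G) = χ(G). -/

import Mathlib

open SimpleGraph

/-- `f` is a strong conflict-free vertex-connection coloring of `G`: any two distinct
vertices are joined by a shortest path on which some color occurs exactly once. -/
def IsSCFVC {V α : Type*} [DecidableEq α] (G : SimpleGraph V) (f : V → α) : Prop :=
  ∀ u v : V, u ≠ v → ∃ p : G.Walk u v, p.length = G.dist u v ∧
    ∃ c : α, (p.support.map f).count c = 1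

/-- The strong conflict-free vertex-connection number. -/
noncomputable def svcfc {V : Type*} (G : SimpleGraph V) : ℕ :=
  sInf {k | ∃ f : V → Fin k, IsSCFVC G f}

lemma count2 {α : Type*} [DecidableEq α] {c0 c1 : α} (h01 : c0 ≠ c1) :
    ∃ c, ([c0, c1] : List α).count c = 1 :=
  ⟨c0, by simp [List.count_cons, h01.symm]⟩

lemma count3 {α : Type*} [DecidableEq α] {c0 c1 c2 : α} (h01 : c0 ≠ c1) (h12 : c1 ≠ c2) :
    ∃ c, ([c0, c1, c2] : List α).count c = 1 := by
  by_cases h02 : c0 = c2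
  · exact ⟨c1, by simp [List.count_cons, h01, h01.symm, h12, h12.symm]⟩
  · exact ⟨c0, by simp [List.count_cons, h01.symm, Ne.symm h02]⟩

lemma count4 {α : Type*} [DecidableEq α] {c0 c1 c2 c3 : α} (h01 : c0 ≠ c1) (h12 : c1 ≠ c2)
    (h23 : c2 ≠ c3) (hbad : ¬(c0 = c2 ∧ c1 = c3)) :
    ∃ c, ([c0, c1, c2, c3] : List α).count c = 1 := by
  by_cases h02 : c0 = c2
  · have h13 : c1 ≠ c3 := fun h => hbad ⟨h02, h⟩
    exact ⟨c1, by simp [List.count_cons, h01, h01.symm, h12, h12.symm, h13, h13.symm]⟩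
  · by_cases h03 : c0 = c3
    · have h13 : c1 ≠ c3 := fun h => h01 (h03.trans h.symm)
      exact ⟨c1, by simp [List.count_cons, h01, h01.symm, h12, h12.symm, h13, h13.symm]⟩
    · exact ⟨c0, by simp [List.count_cons, h01.symm, Ne.symm h02, Ne.symm h03]⟩

/-- The mixed-cliques case. -/
lemma mixed_case {V α : Type*} [DecidableEq α] {G : SimpleGraph V} (hG : G.Connected)
    {A B : Set V}
    (hA : ∀ u ∈ A, ∀ v ∈ A, u ≠ v → G.Adj u v)
    (hB : ∀ u ∈ B, ∀ v ∈ B, u ≠ v → G.Adj u v)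
    {x y x' y' : V} (hx : x ∈ A) (hy : y ∈ B) (hx' : x' ∈ A) (hy' : y' ∈ B)
    (hxy : G.Adj x y) (hxy' : G.Adj x' y') (hne : (x, y) ≠ (x', y'))
    {f : V → α} (hf : ∀ u v : V, G.Adj u v → f u ≠ f v)
    {u v : V} (hu : u ∈ A) (hv : v ∈ B) (huv : u ≠ v) :
    ∃ p : G.Walk u v, p.length = G.dist u v ∧ ∃ c : α, (p.support.map f).count c = 1 := by
  obtain ⟨p, hp⟩ := hG.exists_walk_length_eq_dist u v
  have hdpos : 0 < G.dist u v := hG.pos_dist_of_ne huv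
  by_cases hd1 : G.dist u v = 1
  · have hadj : G.Adj u v := SimpleGraph.dist_eq_one_iff_adj.mp hd1
    refine ⟨SimpleGraph.Walk.cons hadj SimpleGraph.Walk.nil, by simp [hd1], ?_⟩
    simpa using count2 (hf u v hadj)
  by_cases hd2 : G.dist u v = 2
  · rw [hd2] at hp
    cases p with
    | nil => simp at hp
    | cons h q =>
      cases q with
      | nil => simp at hp
      | cons h2 q2 =>
        cases q2 with
        | nil =>
          refine ⟨SimpleGraph.Walk.cons h (SimpleGraph.Walk.cons h2 SimpleGraph.Walk.nil),
            by simp [hd2], ?_⟩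
          simpa using count3 (hf _ _ h) (hf _ _ h2)
        | cons h3 q3 =>
          exfalso
          simp [SimpleGraph.Walk.length_cons] at hp
  -- distance at least 3
  have hd3' : 3 ≤ G.dist u v := by omega
  have hnbu : ∀ w ∈ B, ¬ G.Adj u w := by
    intro w hw hadj
    by_cases hwv : w = v
    · subst hwv; exact hd1 (SimpleGraph.dist_eq_one_iff_adj.mpr hadj)
    · have hle : G.dist u v ≤ 2 := by
        have := SimpleGraph.dist_le (SimpleGraph.Walk.cons hadj
          (SimpleGraph.Walk.cons (hB w hw v hv hwv) SimpleGraph.Walk.nil))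
        simpa using this
      omega
  have hnbv : ∀ w ∈ A, ¬ G.Adj w v := by
    intro w hw hadj
    by_cases hwu : w = u
    · subst hwu; exact hd1 (SimpleGraph.dist_eq_one_iff_adj.mpr hadj)
    · have hle : G.dist u v ≤ 2 := by
        have := SimpleGraph.dist_le (SimpleGraph.Walk.cons (hA u hu w hw (Ne.symm hwu))
          (SimpleGraph.Walk.cons hadj SimpleGraph.Walk.nil))
        simpa using this
      omega
  have hxu : x ≠ u := fun h => hnbu y hy (h ▸ hxy)
  have hyv : y ≠ v := fun h => hnbv x hx (h ▸ hxy)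
  have hxu' : x' ≠ u := fun h => hnbu y' hy' (h ▸ hxy')
  have hyv' : y' ≠ v := fun h => hnbv x' hx' (h ▸ hxy')
  have wux : G.Adj u x := hA u hu x hx (Ne.symm hxu)
  have wyv : G.Adj y v := hB y hy v hv hyv
  have wux' : G.Adj u x' := hA u hu x' hx' (Ne.symm hxu')
  have wyv2 : G.Adj y' v := hB y' hy' v hv hyv'
  have hd3 : G.dist u v = 3 := by
    have := SimpleGraph.dist_le (SimpleGraph.Walk.cons wux (SimpleGraph.Walk.cons hxy
      (SimpleGraph.Walk.cons wyv SimpleGraph.Walk.nil)))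
    simp at this
    omega
  rw [hd3] at hp
  cases p with
  | nil => simp at hp
  | @cons _ a _ h1 q1 =>
    cases q1 with
    | nil => simp at hp
    | @cons _ b _ h2 q2 =>
      cases q2 with
      | nil => simp at hp
      | @cons _ w _ h3 q3 =>
        cases q3 with
        | cons h4 q4 =>
          exfalso
          simp [SimpleGraph.Walk.length_cons] at hp
        | nil =>
          by_cases hbad : f u = f b ∧ f a = f v
          · by_cases hbad1 : f u = f y ∧ f x = f v
            · have hbad2 : ¬(f u = f y' ∧ f x' = f v) := by
                rintro ⟨h1', h2'⟩
                by_cases hxx : x = x'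
                · have hyy : y ≠ y' := by
                    intro h; exact hne (by rw [hxx, h])
                  exact hf y y' (hB y hy y' hy' hyy) (hbad1.1.symm.trans h1')
                · exact hf x x' (hA x hx x' hx' hxx) (hbad1.2.trans h2'.symm)
              refine ⟨SimpleGraph.Walk.cons wux' (SimpleGraph.Walk.cons hxy'
                (SimpleGraph.Walk.cons wyv2 SimpleGraph.Walk.nil)), by simp [hd3], ?_⟩
              simpa using count4 (hf _ _ wux') (hf _ _ hxy') (hf _ _ wyv2) hbad2
            · refine ⟨SimpleGraph.Walk.cons wux (SimpleGraph.Walk.cons hxy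
                (SimpleGraph.Walk.cons wyv SimpleGraph.Walk.nil)), by simp [hd3], ?_⟩
              simpa using count4 (hf _ _ wux) (hf _ _ hxy) (hf _ _ wyv) hbad1
          · refine ⟨SimpleGraph.Walk.cons h1 (SimpleGraph.Walk.cons h2
                (SimpleGraph.Walk.cons h3 SimpleGraph.Walk.nil)), by simp [hd3], ?_⟩
            simpa using count4 (hf _ _ h1) (hf _ _ h2) (hf _ _ h3) hbad

theorem stmt19 {V : Type*} [Fintype V] [DecidableEq V] (G : SimpleGraph V)
    (hG : G.Connected) (A B : Finset V)
    (hdisj : Disjoint A B) (huniv : A ∪ B = Finset.univ)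
    (hA : ∀ u ∈ A, ∀ v ∈ A, u ≠ v → G.Adj u v)
    (hB : ∀ u ∈ B, ∀ v ∈ B, u ≠ v → G.Adj u v)
    (hAne : A.Nonempty) (hBne : B.Nonempty)
    (x y x' y' : V) (hx : x ∈ A) (hy : y ∈ B) (hx' : x' ∈ A) (hy' : y' ∈ B)
    (hxy : G.Adj x y) (hxy' : G.Adj x' y') (hne : (x, y) ≠ (x', y')) :
    (∀ (α : Type) [DecidableEq α] (f : V → α),
        (∀ u v : V, G.Adj u v → f u ≠ f v) → IsSCFVC G f) ∧
    (svcfc G : ℕ∞) = G.chromaticNumber := by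
  have hcover : ∀ w : V, w ∈ A ∨ w ∈ B := by
    intro w
    have : w ∈ A ∪ B := huniv ▸ Finset.mem_univ w
    exact Finset.mem_union.mp this
  have hne' : ((y : V), (x : V)) ≠ (y', x') := by
    intro h
    apply hne
    have h1 : y = y' := congrArg Prod.fst h
    have h2 : x = x' := congrArg Prod.snd h
    rw [h1, h2]
  have main : ∀ (α : Type) [DecidableEq α] (f : V → α),
      (∀ u v : V, G.Adj u v → f u ≠ f v) → IsSCFVC G f := by
    intro α _ f hf u v huv
    rcases hcover u with hu | hu <;> rcases hcover v with hv | hv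
    · -- both in A
      have hadj : G.Adj u v := hA u hu v hv huv
      refine ⟨SimpleGraph.Walk.cons hadj SimpleGraph.Walk.nil, ?_, ?_⟩
      · simp [SimpleGraph.dist_eq_one_iff_adj.mpr hadj]
      · simpa using count2 (hf u v hadj)
    · exact mixed_case hG (fun a ha b hb => hA a ha b hb) (fun a ha b hb => hB a ha b hb)
        hx hy hx' hy' hxy hxy' hne hf hu hv huv
    · exact mixed_case hG (fun a ha b hb => hB a ha b hb) (fun a ha b hb => hA a ha b hb)
        hy hx hy' hx' hxy.symm hxy'.symm hne' hf hu hv huv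
    · have hadj : G.Adj u v := hB u hu v hv huv
      refine ⟨SimpleGraph.Walk.cons hadj SimpleGraph.Walk.nil, ?_, ?_⟩
      · simp [SimpleGraph.dist_eq_one_iff_adj.mpr hadj]
      · simpa using count2 (hf u v hadj)
  refine ⟨main, ?_⟩
  have hset : {k : ℕ | ∃ f : V → Fin k, IsSCFVC G f} = {k : ℕ | G.Colorable k} := by
    ext k
    constructor
    · rintro ⟨f, hf⟩
      refine ⟨SimpleGraph.Coloring.mk f ?_⟩
      intro a b hab
      obtain ⟨p, hlen, c, hc⟩ := hf a b (G.ne_of_adj hab)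
      rw [SimpleGraph.dist_eq_one_iff_adj.mpr hab] at hlen
      -- p has length 1
      cases p with
      | nil => simp at hlen
      | cons h q =>
        cases q with
        | nil =>
          intro hfeq
          simp only [SimpleGraph.Walk.support_cons, SimpleGraph.Walk.support_nil,
            List.map_cons, List.map_nil] at hc
          rw [← hfeq] at hc
          rcases eq_or_ne (f a) c with h' | h' <;> simp [List.count_cons, h'] at hc
        | cons h2 q2 => simp [SimpleGraph.Walk.length_cons] at hlen
    · rintro ⟨C⟩
      exact ⟨C, main (Fin k) C (fun a b h => C.valid h)⟩
  rw [(G.colorable_of_fintype).chromaticNumber_eq_sInf]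
  norm_cast
  rw [svcfc, hset]
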